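/- Fix μ > 0 and K > 0 and let p(s) = e^{μs}/(e^{μs} + K). Every solution f of the ODE ½f'' + (p − ½)μ f' + 1 = 0 on ℝ has the form f(s) = Ã + B̃/(e^{μs} + K) + (2s/μ)(1 − 2p(s)) for some constants Ã, B̃. -/

import Mathlib

theorem statement4 (μ K : ℝ) (hμ : 0 < μ) (hK : 0 < K)
    (p : ℝ → ℝ) (hp : ∀ s, p s = Real.exp (μ * s) / (Real.exp (μ * s) + K))
    (f f' f'' : ℝ → ℝ)
    (hf' : ∀ s, HasDerivAt f (f' s) s)
    (hf'' : ∀ s, HasDerivAt f' (f'' s) s)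
    (hode : ∀ s, (1 / 2) * f'' s + (p s - 1 / 2) * μ * f' s + 1 = 0) :
    ∃ A0 B0 : ℝ, ∀ s,
      f s = A0 + B0 / (Real.exp (μ * s) + K) + (2 * s / μ) * (1 - 2 * p s) := by
  have hμ0 : μ ≠ 0 := ne_of_gt hμ
  set E : ℝ → ℝ := fun s => Real.exp (μ * s) with hEdef
  set N : ℝ → ℝ := fun s => Real.exp (-(μ * s)) with hNdef
  have hEpos : ∀ s, 0 < E s := fun s => Real.exp_pos _
  have hNpos : ∀ s, 0 < N s := fun s => Real.exp_pos _
  have hEK0 : ∀ s, E s + K ≠ 0 := fun s => by have := hEpos s; positivity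
  have hNinv : ∀ s, N s = (E s)⁻¹ := fun s => Real.exp_neg _
  have hEd : ∀ s, HasDerivAt E (μ * E s) s := by
    intro s
    simpa [hEdef, mul_comm] using ((hasDerivAt_id s).const_mul μ).exp
  have hNd : ∀ s, HasDerivAt N (-μ * N s) s := by
    intro s
    have h1 : HasDerivAt (fun x : ℝ => -(μ * x)) (-μ) s := by
      simpa [neg_mul] using (hasDerivAt_id s).const_mul (-μ)
    simpa [hNdef, mul_comm] using h1.exp
  set W : ℝ → ℝ := fun s => E s + 2 * K + K ^ 2 * N s with hWdef
  set V : ℝ → ℝ := fun s => (2 / μ) * E s + 4 * K * s - (2 / μ) * K ^ 2 * N s with hVdef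
  have hWpos : ∀ s, 0 < W s := by
    intro s; have := hEpos s; have := hNpos s
    have : (0:ℝ) < E s + 2 * K + K ^ 2 * N s := by positivity
    simpa [hWdef] using this
  have hWd : ∀ s, HasDerivAt W (μ * E s + K ^ 2 * (-μ * N s)) s := by
    intro s
    exact ((hEd s).add_const (2 * K)).add ((hNd s).const_mul (K ^ 2))
  have hVd : ∀ s, HasDerivAt V ((2 / μ) * (μ * E s) + 4 * K - (2 / μ) * K ^ 2 * (-μ * N s)) s := by
    intro s
    have h1 : HasDerivAt (fun s : ℝ => 4 * K * s) (4 * K) s := by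
      simpa using (hasDerivAt_id s).const_mul (4 * K)
    exact (((hEd s).const_mul (2 / μ)).add h1).sub ((hNd s).const_mul ((2 / μ) * K ^ 2))
  set G : ℝ → ℝ := fun s => f' s * W s + V s with hGdef
  have hGd : ∀ s, HasDerivAt G 0 s := by
    intro s
    have h := ((hf'' s).mul (hWd s)).add (hVd s)
    convert h using 1
    · rfl
    · rfl
    · rfl
    have hode' : f'' s = -2 * (p s - 1 / 2) * μ * f' s - 2 := by linarith [hode s]
    rw [hode', hp s]
    have hE0 : E s ≠ 0 := (hEpos s).ne'
    rw [hNinv s]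
    simp only [hWdef]
    rw [hNinv s]
    field_simp
    ring
  have hGconst : ∀ s, G s = G 0 := fun s =>
    is_const_of_deriv_eq_zero (fun x => (hGd x).differentiableAt)
      (fun x => (hGd x).deriv) s 0
  set C : ℝ := G 0 with hCdef
  have key : ∀ s, f' s * W s = C - V s := by
    intro s
    have := hGconst s
    simp only [hGdef] at this
    linarith
  set F : ℝ → ℝ := fun s =>
    (-C / μ) * (E s + K)⁻¹ + (2 * s / μ) * ((K - E s) * (E s + K)⁻¹) with hFdef
  have hFd : ∀ s, HasDerivAt F (f' s) s := by
    intro s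
    have hI : HasDerivAt (fun s => (E s + K)⁻¹) (-(μ * E s) / (E s + K) ^ 2) s :=
      ((hEd s).add_const K).inv (hEK0 s)
    have ha : HasDerivAt (fun s : ℝ => 2 * s / μ) (2 / μ) s := by
      have := ((hasDerivAt_id s).const_mul 2).div_const μ
      simpa using this
    have hb : HasDerivAt (fun s => (K - E s) * (E s + K)⁻¹)
        ((0 - μ * E s) * (E s + K)⁻¹ + (K - E s) * (-(μ * E s) / (E s + K) ^ 2)) s :=
      ((hasDerivAt_const s K).sub (hEd s)).mul hI
    have h := (hI.const_mul (-C / μ)).add (ha.mul hb)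
    convert h using 1
    · rfl
    · rfl
    · rfl
    -- show f' s equals that derivative expression
    have hW0 : W s ≠ 0 := (hWpos s).ne'
    have hfp : f' s = (C - V s) / W s := by
      rw [eq_div_iff hW0]; exact key s
    rw [hfp]
    simp only [hWdef, hVdef]
    rw [hNinv s]
    have hE0 : E s ≠ 0 := (hEpos s).ne'
    field_simp
    ring
  have hHd : ∀ s, HasDerivAt (fun t => f t - F t) 0 s := by
    intro s
    exact ((hf' s).sub (hFd s)).congr_deriv (sub_self _)
  have hHconst : ∀ s, f s - F s = f 0 - F 0 := fun s =>
    is_const_of_deriv_eq_zero (fun x => (hHd x).differentiableAt)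
      (fun x => (hHd x).deriv) s 0
  refine ⟨f 0 - F 0, -C / μ, fun s => ?_⟩
  have hfs : f s = (f 0 - F 0) + F s := by linarith [hHconst s]
  rw [hfs, hp s]
  simp only [hFdef]
  have hE0 : E s ≠ 0 := (hEpos s).ne'
  have h3 : 1 - 2 * (E s / (E s + K)) = (K - E s) * (E s + K)⁻¹ := by
    have hEK := hEK0 s
    field_simp
    ring
  rw [h3]
  ring
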